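/- Let G be a finite directed graph with edge weights in ℤ², such that every simple cycle C of G satisfies w₁(C) ≥ 0 and w₂(C) ≥ 1, let N be the number of vertices and W a bound on the absolute values of weights. Then every infinite path ρ in G satisfies liminf_{k→∞} w₂(ρ[0,k])/k ≥ 1/N > 0. -/

import Mathlib

open Finset

lemma key_bound {V : Type*} [Fintype V]
    (E : V → V → Prop) (w₂ : V → V → ℤ) (W : ℕ)
    (hW : ∀ u v : V, E u v → |w₂ u v| ≤ (W : ℤ))
    (hcyc : ∀ (n : ℕ) (c : ℕ → V), 1 ≤ n → c n = c 0 →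
      (∀ i < n, E (c i) (c (i + 1))) →
      (∀ i < n, ∀ j < n, c i = c j → i = j) →
      1 ≤ ∑ i ∈ Finset.range n, w₂ (c i) (c (i + 1))) :
    ∀ (k : ℕ) (ρ : ℕ → V), (∀ m : ℕ, E (ρ m) (ρ (m + 1))) →
      (k : ℤ) - (Fintype.card V) - (Fintype.card V)^2 * W ≤
        (Fintype.card V) * ∑ i ∈ Finset.range k, w₂ (ρ i) (ρ (i + 1)) := by
  classical
  set N := Fintype.card V with hNdef
  intro k
  induction k using Nat.strong_induction_on with
  | _ k ih =>
  intro ρ hρ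
  by_cases hk : k ≤ N
  · -- base case
    have hterm : ∀ m ∈ range k, -(W : ℤ) ≤ w₂ (ρ m) (ρ (m + 1)) := by
      intro m _
      have := abs_le.mp (hW _ _ (hρ m))
      linarith [this.1]
    have hsum : (k : ℤ) * (-(W : ℤ)) ≤ ∑ i ∈ range k, w₂ (ρ i) (ρ (i + 1)) := by
      calc (k : ℤ) * (-(W:ℤ)) = ∑ _i ∈ range k, (-(W:ℤ)) := by
            rw [Finset.sum_const, card_range]; ring
        _ ≤ _ := Finset.sum_le_sum hterm
    have hN0 : (0:ℤ) ≤ N := Int.natCast_nonneg N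
    have hk' : (k:ℤ) ≤ N := by exact_mod_cast hk
    have hW0 : (0:ℤ) ≤ W := Int.natCast_nonneg W
    nlinarith [mul_le_mul_of_nonneg_left hsum hN0,
      mul_nonneg (mul_nonneg (sub_nonneg.mpr hk') hN0) hW0]
  · -- k > N : find a simple cycle among the first N+1 vertices
    push_neg at hk
    obtain ⟨a, b, hab, heq⟩ := Fintype.exists_ne_map_eq_of_card_lt
      (fun m : Fin (N + 1) => ρ m) (by simp [hNdef])
    have hex : ∃ j : ℕ, ∃ i < j, ρ i = ρ j := by
      rcases lt_or_gt_of_ne hab with h | h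
      · exact ⟨b, a, h, heq⟩
      · exact ⟨a, b, h, heq.symm⟩
    set j₀ := Nat.find hex with hj₀def
    obtain ⟨i₀, hi₀lt, hi₀eq⟩ := Nat.find_spec hex
    have hj₀le : j₀ ≤ N := by
      have hb : (b : ℕ) ≤ N := Nat.lt_succ_iff.mp b.isLt
      have ha : (a : ℕ) ≤ N := Nat.lt_succ_iff.mp a.isLt
      rcases lt_or_gt_of_ne hab with h | h
      · exact le_trans (Nat.find_le ⟨a, h, heq⟩) hb
      · exact le_trans (Nat.find_le ⟨b, h, heq.symm⟩) ha
    have hmin : ∀ b' < j₀, ∀ a' < b', ρ a' ≠ ρ b' := by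
      intro b' hb' a' ha' hne
      exact Nat.find_min hex hb' ⟨a', ha', hne⟩
    set n := j₀ - i₀ with hndef
    have hn1 : 1 ≤ n := by omega
    have hin : i₀ + n = j₀ := by omega
    -- the cycle
    have hcycsum : 1 ≤ ∑ m ∈ range n, w₂ (ρ (i₀ + m)) (ρ (i₀ + m + 1)) := by
      have := hcyc n (fun m => ρ (i₀ + m)) hn1
        (by show ρ (i₀ + n) = ρ (i₀ + 0); rw [hin, Nat.add_zero]; exact hi₀eq.symm)
        (fun m _ => hρ (i₀ + m))
        (by
          intro x hx y hy hxy
          by_contra hne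
          rcases Nat.lt_or_ge x y with h | h
          · exact hmin (i₀ + y) (by omega) (i₀ + x) (by omega) hxy
          · have h' : y < x := by omega
            exact hmin (i₀ + x) (by omega) (i₀ + y) (by omega) hxy.symm)
      simpa [Nat.add_assoc] using this
    -- the shortened path
    set ρ' : ℕ → V := fun m => if m < i₀ then ρ m else ρ (m + n) with hρ'def
    have hρ'edge : ∀ m : ℕ, E (ρ' m) (ρ' (m + 1)) := by
      intro m
      by_cases h1 : m + 1 < i₀
      · simp only [hρ'def, if_pos h1, if_pos (by omega : m < i₀)]
        exact hρ m
      · by_cases h2 : m < i₀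
        · -- m + 1 = i₀
          have hm1 : m + 1 = i₀ := by omega
          simp only [hρ'def, if_pos h2, if_neg h1]
          have : ρ (m + 1 + n) = ρ (m + 1) := by
            rw [hm1, hin]; exact hi₀eq.symm
          rw [this]; exact hρ m
        · simp only [hρ'def, if_neg h1, if_neg h2]
          have : m + 1 + n = (m + n) + 1 := by omega
          rw [this]; exact hρ (m + n)
    have hkn : k - n < k := by omega
    have IH := ih (k - n) hkn ρ' hρ'edge
    -- sum identity
    have hsplit : ∑ i ∈ range k, w₂ (ρ i) (ρ (i + 1)) =
        (∑ i ∈ range (k - n), w₂ (ρ' i) (ρ' (i + 1))) +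
        ∑ m ∈ range n, w₂ (ρ (i₀ + m)) (ρ (i₀ + m + 1)) := by
      have h1 : ∑ i ∈ range k, w₂ (ρ i) (ρ (i + 1)) =
          (∑ i ∈ range i₀, w₂ (ρ i) (ρ (i + 1))) +
          (∑ i ∈ Ico i₀ j₀, w₂ (ρ i) (ρ (i + 1))) +
          (∑ i ∈ Ico j₀ k, w₂ (ρ i) (ρ (i + 1))) := by
        rw [range_eq_Ico, ← Finset.sum_Ico_consecutive _ (Nat.zero_le i₀) (by omega : i₀ ≤ k),
          ← Finset.sum_Ico_consecutive _ (by omega : i₀ ≤ j₀) (by omega : j₀ ≤ k),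
          ← range_eq_Ico]
        ring
      have h2 : ∑ i ∈ Ico i₀ j₀, w₂ (ρ i) (ρ (i + 1)) =
          ∑ m ∈ range n, w₂ (ρ (i₀ + m)) (ρ (i₀ + m + 1)) := by
        rw [Finset.sum_Ico_eq_sum_range]
      have h3 : ∑ i ∈ range (k - n), w₂ (ρ' i) (ρ' (i + 1)) =
          (∑ i ∈ range i₀, w₂ (ρ i) (ρ (i + 1))) +
          (∑ i ∈ Ico j₀ k, w₂ (ρ i) (ρ (i + 1))) := by
        have hs : ∑ i ∈ range (k - n), w₂ (ρ' i) (ρ' (i + 1)) =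
            (∑ i ∈ range i₀, w₂ (ρ' i) (ρ' (i + 1))) +
            (∑ i ∈ Ico i₀ (k - n), w₂ (ρ' i) (ρ' (i + 1))) := by
          rw [range_eq_Ico, ← Finset.sum_Ico_consecutive _ (Nat.zero_le i₀)
            (by omega : i₀ ≤ k - n), ← range_eq_Ico]
        rw [hs]
        congr 1
        · apply Finset.sum_congr rfl
          intro m hm
          have hm' : m < i₀ := mem_range.mp hm
          by_cases h1 : m + 1 < i₀
          · simp only [hρ'def, if_pos h1, if_pos hm']
          · have hm1 : m + 1 = i₀ := by omega
            simp only [hρ'def, if_pos hm', if_neg h1]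
            congr 1
            rw [hm1, hin]; exact hi₀eq.symm
        · rw [Finset.sum_Ico_eq_sum_range, Finset.sum_Ico_eq_sum_range]
          have hkj : k - n - i₀ = k - j₀ := by omega
          rw [hkj]
          apply Finset.sum_congr rfl
          intro m _
          have ha1 : ¬ (i₀ + m < i₀) := by omega
          have ha2 : ¬ (i₀ + m + 1 < i₀) := by omega
          simp only [hρ'def, if_neg ha1, if_neg ha2]
          congr 2 <;> omega
      rw [h1, h2, h3]; ring
    -- arithmetic
    have hN0 : (0:ℤ) ≤ N := Int.natCast_nonneg N
    have hnN : (n:ℤ) ≤ N := by exact_mod_cast le_trans (by omega : n ≤ j₀) hj₀le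
    have hnk : ((k - n : ℕ) : ℤ) = (k:ℤ) - n := by
      have : n ≤ k := by omega
      omega
    rw [hsplit]
    rw [hnk] at IH
    nlinarith [IH, hcycsum, mul_le_mul_of_nonneg_left hcycsum hN0]

open Finset Filter

theorem liminf_ge_one_div_card {V : Type*} [Fintype V]
    (E : V → V → Prop) (w₁ w₂ : V → V → ℤ)
    (W : ℕ) (hW : ∀ u v : V, E u v → |w₁ u v| ≤ (W : ℤ) ∧ |w₂ u v| ≤ (W : ℤ))
    (hcyc : ∀ (n : ℕ) (c : ℕ → V), 1 ≤ n → c n = c 0 →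
      (∀ i < n, E (c i) (c (i + 1))) →
      (∀ i < n, ∀ j < n, c i = c j → i = j) →
      0 ≤ ∑ i ∈ Finset.range n, w₁ (c i) (c (i + 1)) ∧
      1 ≤ ∑ i ∈ Finset.range n, w₂ (c i) (c (i + 1)))
    (ρ : ℕ → V) (hρ : ∀ k : ℕ, E (ρ k) (ρ (k + 1))) :
    (1 : ℝ) / (Fintype.card V) ≤
      Filter.atTop.liminf
        (fun k : ℕ => ((∑ i ∈ Finset.range k, w₂ (ρ i) (ρ (i + 1)) : ℤ) : ℝ) / k) ∧
    0 < (1 : ℝ) / (Fintype.card V) := by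
  classical
  have hNpos : 0 < Fintype.card V := Fintype.card_pos_iff.mpr ⟨ρ 0⟩
  set N := Fintype.card V with hNdef
  have hNR : (0:ℝ) < N := by exact_mod_cast hNpos
  have hNR1 : (1:ℝ) ≤ N := by exact_mod_cast hNpos
  refine ⟨?_, by positivity⟩
  have key := key_bound E w₂ W (fun u v h => (hW u v h).2)
    (fun n c h1 h2 h3 h4 => (hcyc n c h1 h2 h3 h4).2)
  set f : ℕ → ℝ :=
    fun k : ℕ => ((∑ i ∈ Finset.range k, w₂ (ρ i) (ρ (i + 1)) : ℤ) : ℝ) / k with hf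
  set A : ℝ := (N:ℝ) + (N:ℝ)^2 * W with hA
  have hA0 : 0 ≤ A := by positivity
  set g : ℕ → ℝ := fun k : ℕ => 1/(N:ℝ) - A/((N:ℝ)*k) with hg
  have hbound : ∀ k : ℕ, 1 ≤ k → g k ≤ f k := by
    intro k hk
    have h := key k ρ hρ
    have hkR : (0:ℝ) < k := by exact_mod_cast hk
    have h' : (k:ℝ) - A ≤
        (N:ℝ) * ((∑ i ∈ Finset.range k, w₂ (ρ i) (ρ (i + 1)) : ℤ) : ℝ) := by
      calc (k:ℝ) - A
          = (((k:ℤ) - (N:ℤ) - (N:ℤ)^2*(W:ℤ) : ℤ) : ℝ) := by rw [hA]; push_cast; ring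
        _ ≤ _ := by exact_mod_cast h
    have heq : g k = ((k:ℝ) - A)/((N:ℝ)*k) := by
      rw [hg]
      field_simp
    rw [heq, hf, div_le_div_iff₀ (by positivity) hkR]
    nlinarith
  have htend : Tendsto g atTop (nhds (1/(N:ℝ))) := by
    have h1 : ∀ k : ℕ, g k = 1/(N:ℝ) - (A/(N:ℝ)) * (1/(k:ℝ)) := by
      intro k; rw [hg]; rw [div_mul_div_comm]; ring_nf
    rw [show (1/(N:ℝ)) = 1/(N:ℝ) - (A/(N:ℝ)) * 0 by ring, funext h1]
    exact tendsto_const_nhds.sub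
      (tendsto_const_nhds.mul tendsto_one_div_atTop_nhds_zero_nat)
  have hglim : atTop.liminf g = 1/(N:ℝ) := htend.liminf_eq
  rw [← hglim]
  apply Filter.liminf_le_liminf
  · exact eventually_atTop.mpr ⟨1, hbound⟩
  · exact htend.isBoundedUnder_ge
  · refine Filter.isCoboundedUnder_ge_of_le Filter.atTop (x := (W:ℝ)) fun k => ?_
    rcases Nat.eq_zero_or_pos k with rfl | hk
    · simp [hf]
    have hS : (∑ i ∈ Finset.range k, w₂ (ρ i) (ρ (i + 1)) : ℤ) ≤ (k:ℤ) * W := by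
      calc (∑ i ∈ Finset.range k, w₂ (ρ i) (ρ (i + 1)) : ℤ)
          ≤ ∑ _i ∈ Finset.range k, (W:ℤ) := by
            apply Finset.sum_le_sum
            intro m _
            exact (abs_le.mp (hW _ _ (hρ m)).2).2
        _ = (k:ℤ) * W := by rw [Finset.sum_const, Finset.card_range]; ring
    have hkR : (0:ℝ) < k := by exact_mod_cast hk
    rw [hf, div_le_iff₀ hkR]
    calc ((∑ i ∈ Finset.range k, w₂ (ρ i) (ρ (i + 1)) : ℤ):ℝ) ≤ (k:ℝ) * W := by
          exact_mod_cast hS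
      _ = (W:ℝ) * k := by ring
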